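/- Entropy production is nonnegative and dominated by the Fisher information: for every α∈(1,2] (with φ=φ_α) and also for α=1 (with φ=φ₁), and for every f:𝒦_h→(0,∞), one has 0 ≤ H^{φ_α}(f|m_h) − H^{φ_α}(πf|m_h) ≤ (2/α)·F(f), where F is the Fisher information computed with φ=φ_α. -/

import Mathlib

open scoped BigOperators Classical RealInnerProductSpace
open Finset MeasureTheory

noncomputable section

/-- Points of the state space `ℝᵈ` with the Euclidean norm. -/
abbrev Pt (d : ℕ) : Type := EuclideanSpace ℝ (Fin d)

/-- The set `G` of moves `+_j`, `-_j`. -/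
inductive Move (d : ℕ) : Type where
  | pos : Fin d → Move d
  | neg : Fin d → Move d
  deriving DecidableEq, Fintype

namespace Move

/-- The direction of a move. -/
def dir {d : ℕ} : Move d → Fin d
  | pos j => j
  | neg j => j

/-- Action of a move on `ℝᵈ`: `(±_j) x = x ± h eⱼ`. -/
def act {d : ℕ} (h : ℝ) : Move d → Pt d → Pt d
  | pos j, x => x + EuclideanSpace.single j h
  | neg j, x => x - EuclideanSpace.single j h

end Move

/-- Action of a move in `G ∪ {e}` (`none` is the null move `e`). -/
def actO {d : ℕ} (h : ℝ) : Option (Move d) → Pt d → Pt d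
  | none, x => x
  | some γ, x => γ.act h x

/-- The grid `𝒦_h` of cell centers, where `N = 2K/h`. -/
def grid (d : ℕ) (K h : ℝ) (N : ℕ) : Finset (Pt d) :=
  Finset.image
    (fun n : Fin d → Fin N =>
      (EuclideanSpace.equiv (Fin d) ℝ).symm fun j => -K + h * ((n j : ℕ) + 1) - h / 2)
    Finset.univ

/-- The averaged potential `V^h`. -/
def Vh {d : ℕ} (h : ℝ) (V : Pt d → ℝ) (x : Pt d) : ℝ :=
  (1 / h ^ d) * ∫ s in {s : Pt d | ∀ j, s j ∈ Set.Icc (-(h / 2)) (h / 2)}, V (x + s)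

/-- The one-dimensional averaged potential `V_j^h`. -/
def Vjh (h : ℝ) (W : ℝ → ℝ) (x : ℝ) : ℝ :=
  (1 / h) * ∫ s in Set.Icc (-(h / 2)) (h / 2), W (x + s)

/-- The transition rates `c(x, γ)`. -/
def rate (d : ℕ) (K h σ : ℝ) (N : ℕ) (V : Pt d → ℝ) (x : Pt d) (γ : Move d) : ℝ :=
  if x ∈ grid d K h N ∧ γ.act h x ∈ grid d K h N then
    σ ^ 2 / h ^ 2 * Real.exp (-(Vh h V (γ.act h x) - Vh h V x) / (2 * σ ^ 2))
  else 0

/-- The generator `L_h`. -/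
def gen (d : ℕ) (K h σ : ℝ) (N : ℕ) (V : Pt d → ℝ) (f : Pt d → ℝ) (i : Pt d) : ℝ :=
  ∑ γ : Move d, rate d K h σ N V i γ * (f (γ.act h i) - f i)

/-- The normalization constant `Z`. -/
def Znorm (d : ℕ) (K h σ : ℝ) (N : ℕ) (V : Pt d → ℝ) : ℝ :=
  ∑ k ∈ grid d K h N, Real.exp (-Vh h V k / σ ^ 2)

/-- The invariant measure `m_h`. -/
def mh (d : ℕ) (K h σ : ℝ) (N : ℕ) (V : Pt d → ℝ) (i : Pt d) : ℝ :=
  Real.exp (-Vh h V i / σ ^ 2) / Znorm d K h σ N V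

/-- `κ₊(i,j)`. -/
def kplus (d : ℕ) (K h σ : ℝ) (N : ℕ) (V : Pt d → ℝ) (i : Pt d) (j : Fin d) : ℝ :=
  rate d K h σ N V i (Move.pos j) - rate d K h σ N V ((Move.pos j).act h i) (Move.pos j)
    - ∑ γ ∈ Finset.univ.filter fun γ : Move d => γ.dir ≠ j,
        max (rate d K h σ N V ((Move.pos j).act h i) γ - rate d K h σ N V i γ) 0

/-- `κ₋(i,j)`. -/
def kminus (d : ℕ) (K h σ : ℝ) (N : ℕ) (V : Pt d → ℝ) (i : Pt d) (j : Fin d) : ℝ :=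
  rate d K h σ N V i (Move.neg j) - rate d K h σ N V ((Move.neg j).act h i) (Move.neg j)
    - ∑ γ ∈ Finset.univ.filter fun γ : Move d => γ.dir ≠ j,
        max (rate d K h σ N V ((Move.neg j).act h i) γ - rate d K h σ N V i γ) 0

/-- Assumption (A3). -/
def A3 (d : ℕ) (K h σ : ℝ) (N : ℕ) (V : Pt d → ℝ) : Prop :=
  (∀ j : Fin d, ∀ i ∈ grid d K h N, (Move.pos j).act h i ∈ grid d K h N →
      0 < kplus d K h σ N V i j) ∧
  (∀ j : Fin d, ∀ i ∈ grid d K h N, (Move.neg j).act h i ∈ grid d K h N →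
      0 < kminus d K h σ N V i j)

/-- `κ_φ = min {κ₊(i,j) + κ₋(i+heⱼ,j)}`. -/
def kappaPhi (d : ℕ) (K h σ : ℝ) (N : ℕ) (V : Pt d → ℝ) : ℝ :=
  sInf { r : ℝ | ∃ j : Fin d, ∃ i ∈ grid d K h N, (Move.pos j).act h i ∈ grid d K h N ∧
    r = kplus d K h σ N V i j + kminus d K h σ N V ((Move.pos j).act h i) j }

/-- The φ-entropy `H^φ(f | m_h)`. -/
def entPhi (d : ℕ) (K h σ : ℝ) (N : ℕ) (V : Pt d → ℝ) (φ : ℝ → ℝ) (f : Pt d → ℝ) : ℝ :=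
  ∑ i ∈ grid d K h N, φ (f i) * mh d K h σ N V i
    - φ (∑ i ∈ grid d K h N, f i * mh d K h σ N V i)

/-- The Dirichlet form `E(f,g)`. -/
def dirichlet (d : ℕ) (K h σ : ℝ) (N : ℕ) (V : Pt d → ℝ) (f g : Pt d → ℝ) : ℝ :=
  -∑ i ∈ grid d K h N, f i * gen d K h σ N V g i * mh d K h σ N V i

/-- Assumption (A1) on the entropy density `φ`. -/
def A1 (φ : ℝ → ℝ) : Prop :=
  ContinuousOn φ (Set.Ici 0) ∧ (∀ x ∈ Set.Ici (0 : ℝ), 0 ≤ φ x) ∧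
  ConvexOn ℝ (Set.Ici 0) φ ∧
  (∀ x ∈ Set.Ioi (0 : ℝ), DifferentiableAt ℝ φ x) ∧
  ContinuousOn (deriv φ) (Set.Ioi 0) ∧
  ConvexOn ℝ (Set.Ioi 0 ×ˢ Set.Ioi 0)
    (fun p : ℝ × ℝ => (deriv φ p.1 - deriv φ p.2) * (p.1 - p.2))

/-- φ is continuous, nonnegative and convex on `[0,∞)`, and C¹ on `(0,∞)`. -/
def PhiRegular (φ : ℝ → ℝ) : Prop :=
  ContinuousOn φ (Set.Ici 0) ∧ (∀ x ∈ Set.Ici (0 : ℝ), 0 ≤ φ x) ∧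
  ConvexOn ℝ (Set.Ici 0) φ ∧
  (∀ x ∈ Set.Ioi (0 : ℝ), DifferentiableAt ℝ φ x) ∧
  ContinuousOn (deriv φ) (Set.Ioi 0)

/-- `f^φ(x, y) = (φ'(f x) - φ'(f y)) (f x - f y)`. -/
def fphi {d : ℕ} (φ : ℝ → ℝ) (f : Pt d → ℝ) (x y : Pt d) : ℝ :=
  (deriv φ (f x) - deriv φ (f y)) * (f x - f y)

/-- Coupling rates `𝐜(i, i+heⱼ, γ, γ̄)` for the neighboring pair `(i, i+heⱼ)`. -/
def crate (d : ℕ) (K h σ : ℝ) (N : ℕ) (V : Pt d → ℝ) (i : Pt d) (j : Fin d) :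
    Option (Move d) → Option (Move d) → ℝ
  | some a, some b =>
      if a = b then min (rate d K h σ N V i a) (rate d K h σ N V ((Move.pos j).act h i) a)
      else if a = Move.pos j ∧ b.dir ≠ j then
        max (rate d K h σ N V ((Move.pos j).act h i) b - rate d K h σ N V i b) 0
      else if a.dir ≠ j ∧ b = Move.neg j then
        max (rate d K h σ N V i a - rate d K h σ N V ((Move.pos j).act h i) a) 0
      else 0
  | some a, none => if a = Move.pos j then kplus d K h σ N V i j else 0
  | none, some b => if b = Move.neg j then kminus d K h σ N V ((Move.pos j).act h i) j else 0
  | none, none => 0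

/-- Coupling rates `𝐜(i, δ i, γ, γ̄)` for an arbitrary move `δ ∈ G`. -/
def cpl (d : ℕ) (K h σ : ℝ) (N : ℕ) (V : Pt d → ℝ) (i : Pt d) (δ : Move d)
    (γ γb : Option (Move d)) : ℝ :=
  match δ with
  | Move.pos j => crate d K h σ N V i j γ γb
  | Move.neg j => crate d K h σ N V ((Move.neg j).act h i) j γb γ

/-- Synchronous coupling rates `𝐜(i, k, γ, γ̄)`. -/
def syncRate (d : ℕ) (K h σ : ℝ) (N : ℕ) (V : Pt d → ℝ) (i k : Pt d) :
    Option (Move d) → Option (Move d) → ℝ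
  | some a, some b => if a = b then min (rate d K h σ N V i a) (rate d K h σ N V k a) else 0
  | some a, none => max (rate d K h σ N V i a - rate d K h σ N V k a) 0
  | none, some b => max (rate d K h σ N V k b - rate d K h σ N V i b) 0
  | none, none => 0

/-- The graph (ℓ¹) distance. -/
def graphDist {d : ℕ} (x y : Pt d) : ℝ := ∑ j, |x j - y j|

/-- The generator matrix `Q`. -/
def Qmat (d : ℕ) (K h σ : ℝ) (N : ℕ) (V : Pt d → ℝ) :
    Matrix {x // x ∈ grid d K h N} {x // x ∈ grid d K h N} ℝ := fun i k =>
  (∑ γ : Move d, if γ.act h i.1 = k.1 then rate d K h σ N V i.1 γ else 0)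
    - (if i = k then ∑ γ : Move d, rate d K h σ N V i.1 γ else 0)

/-- The semigroup `S_t = e^{tQ}` acting on functions. -/
def St (d : ℕ) (K h σ : ℝ) (N : ℕ) (V : Pt d → ℝ) (t : ℝ) (f : Pt d → ℝ) (i : Pt d) : ℝ :=
  if hi : i ∈ grid d K h N then
    ∑ k : {x // x ∈ grid d K h N},
      NormedSpace.exp (t • Qmat d K h σ N V) ⟨i, hi⟩ k * f k.1
  else 0

/-- The transition function `ν ↦ ν p_t` acting on measures. -/
def measPt (d : ℕ) (K h σ : ℝ) (N : ℕ) (V : Pt d → ℝ) (t : ℝ) (ν : Pt d → ℝ) (k : Pt d) : ℝ :=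
  if hk : k ∈ grid d K h N then
    ∑ i : {x // x ∈ grid d K h N},
      ν i.1 * NormedSpace.exp (t • Qmat d K h σ N V) i ⟨k, hk⟩
  else 0

/-- `ν` is a probability measure on the grid. -/
def IsProbOn (d : ℕ) (K h : ℝ) (N : ℕ) (ν : Pt d → ℝ) : Prop :=
  (∀ x ∈ grid d K h N, 0 ≤ ν x) ∧ ∑ x ∈ grid d K h N, ν x = 1

/-- Optimal transport cost between `ν` and `η` for the cost function `D`. -/
def Wgen (d : ℕ) (K h : ℝ) (N : ℕ) (D : Pt d → Pt d → ℝ) (ν η : Pt d → ℝ) : ℝ :=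
  sInf { r : ℝ | ∃ γc : Pt d → Pt d → ℝ,
    (∀ x ∈ grid d K h N, ∀ y ∈ grid d K h N, 0 ≤ γc x y) ∧
    (∀ x ∈ grid d K h N, ∑ y ∈ grid d K h N, γc x y = ν x) ∧
    (∀ y ∈ grid d K h N, ∑ x ∈ grid d K h N, γc x y = η y) ∧
    r = ∑ x ∈ grid d K h N, ∑ y ∈ grid d K h N, D x y * γc x y }

/-- The `L^p` Wasserstein distance w.r.t. the Euclidean distance. -/
def Wp (d : ℕ) (K h : ℝ) (N : ℕ) (p : ℝ) (ν η : Pt d → ℝ) : ℝ :=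
  (Wgen d K h N (fun x y => ‖x - y‖ ^ p) ν η) ^ (1 / p)

/-- The `L¹` Wasserstein distance w.r.t. the Euclidean distance. -/
def W1 (d : ℕ) (K h : ℝ) (N : ℕ) (ν η : Pt d → ℝ) : ℝ :=
  Wgen d K h N (fun x y => ‖x - y‖) ν η

/-- The `L¹` Wasserstein distance w.r.t. the graph distance. -/
def Wd1 (d : ℕ) (K h : ℝ) (N : ℕ) (ν η : Pt d → ℝ) : ℝ :=
  Wgen d K h N graphDist ν η

/-- The rescaling factor `𝒯 = 2 max_i Σ_γ c(i,γ)`. -/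
def Tcal (d : ℕ) (K h σ : ℝ) (N : ℕ) (V : Pt d → ℝ) : ℝ :=
  2 * sSup ((fun i => ∑ γ : Move d, rate d K h σ N V i γ) '' (grid d K h N : Set (Pt d)))

/-- The time step `τ = 1/𝒯`. -/
def tauStep (d : ℕ) (K h σ : ℝ) (N : ℕ) (V : Pt d → ℝ) : ℝ :=
  1 / Tcal d K h σ N V

/-- The rescaled jump rates `p(i,γ) = c(i,γ)/𝒯`. -/
def prate (d : ℕ) (K h σ : ℝ) (N : ℕ) (V : Pt d → ℝ) (i : Pt d) (γ : Move d) : ℝ :=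
  rate d K h σ N V i γ / Tcal d K h σ N V

/-- The transition matrix `π` acting on functions: `(π f)(i) = Σ_k π(i,k) f(k)`. -/
def piStep (d : ℕ) (K h σ : ℝ) (N : ℕ) (V : Pt d → ℝ) (f : Pt d → ℝ) (i : Pt d) : ℝ :=
  f i + ∑ γ : Move d, prate d K h σ N V i γ * (f (γ.act h i) - f i)

/-- The entries `π(i,k)` of the transition matrix. -/
def piKernel (d : ℕ) (K h σ : ℝ) (N : ℕ) (V : Pt d → ℝ) (i k : Pt d) : ℝ :=
  (∑ γ : Move d, if γ.act h i = k then prate d K h σ N V i γ else 0)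
    + (if i = k then 1 - ∑ γ : Move d, prate d K h σ N V i γ else 0)

/-- The transition matrix `π` acting on measures: `(ν π)(k) = Σ_i ν(i) π(i,k)`. -/
def piMeas (d : ℕ) (K h σ : ℝ) (N : ℕ) (V : Pt d → ℝ) (ν : Pt d → ℝ) (k : Pt d) : ℝ :=
  if k ∈ grid d K h N then ∑ i ∈ grid d K h N, ν i * piKernel d K h σ N V i k else 0

/-- The Fisher information `F(f)`. -/
def fisher (d : ℕ) (K h σ : ℝ) (N : ℕ) (V : Pt d → ℝ) (φ : ℝ → ℝ) (f : Pt d → ℝ) : ℝ :=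
  (1 / 2) * ∑ i ∈ grid d K h N, ∑ γ : Move d,
    prate d K h σ N V i γ * (deriv φ (f (γ.act h i)) - deriv φ (f i))
      * (f (γ.act h i) - f i) * mh d K h σ N V i

/-- The entropy densities `φ_α` (with `φ₁(x) = x log x - x + 1`). -/
def phiAlpha (α : ℝ) (x : ℝ) : ℝ :=
  if α = 1 then x * Real.log x - x + 1 else (α - 1)⁻¹ * (x ^ α - x) - x + 1

/-- Assumption (A2): strong `κ`-convexity of `V` on `[-K,K]^d`. -/
def A2 (d : ℕ) (K : ℝ) (V : Pt d → ℝ) (κ : ℝ) : Prop :=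
  ∀ x y : Pt d, (∀ j, |x j| ≤ K) → (∀ j, |y j| ≤ K) →
    κ * ‖x - y‖ ^ 2 ≤ ⟪x - y, gradient V x - gradient V y⟫

/-- `V` is additive with components `Vs j`. -/
def IsAdditive (d : ℕ) (V : Pt d → ℝ) (Vs : Fin d → ℝ → ℝ) : Prop :=
  ∀ x : Pt d, V x = ∑ j, Vs j (x j)

/-- `∇V` is Lipschitz continuous with constant `L` on `[-K,K]^d`. -/
def GradLip (d : ℕ) (K : ℝ) (V : Pt d → ℝ) (L : ℝ) : Prop :=
  ∀ x y : Pt d, (∀ j, |x j| ≤ K) → (∀ j, |y j| ≤ K) →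
    ‖gradient V x - gradient V y‖ ≤ L * ‖x - y‖

/-- The basic assumptions on the discretization parameters. -/
def Params (d : ℕ) (K h σ : ℝ) (N : ℕ) (V : Pt d → ℝ) : Prop :=
  1 ≤ d ∧ 0 < K ∧ 0 < h ∧ (N : ℝ) * h = 2 * K ∧ 0 < σ ∧ ContDiff ℝ 2 V

/-- The discrete-time coupling `𝐩` for the neighboring pair `(i, i+heⱼ)`. -/
def pcoup (d : ℕ) (K h σ : ℝ) (N : ℕ) (V : Pt d → ℝ) (i : Pt d) (j : Fin d)
    (q : Option (Move d) × Option (Move d)) : ℝ :=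
  if q = (none, none) then
    1 - ∑ q' ∈ Finset.univ.filter
          (fun q' : Option (Move d) × Option (Move d) => q' ≠ (none, none)),
        crate d K h σ N V i j q'.1 q'.2 / Tcal d K h σ N V
  else crate d K h σ N V i j q.1 q.2 / Tcal d K h σ N V

end
section EntropyProductionHelpers

namespace Move

/-- The inverse move. -/
def inv {d : ℕ} : Move d → Move d
  | .pos j => .neg j
  | .neg j => .pos j

lemma act_inv_act {d : ℕ} (h : ℝ) (γ : Move d) (x : Pt d) :
    γ.inv.act h (γ.act h x) = x := by
  cases γ <;> simp [Move.act, Move.inv]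

lemma inv_inv {d : ℕ} (γ : Move d) : γ.inv.inv = γ := by
  cases γ <;> rfl

end Move

variable {d : ℕ} {K h σ : ℝ} {N : ℕ} {V : Pt d → ℝ}

lemma rate_nonneg (x : Pt d) (γ : Move d) : 0 ≤ rate d K h σ N V x γ := by
  unfold rate
  split
  · positivity
  · exact le_refl 0

lemma mem_of_rate_ne (x : Pt d) (γ : Move d) (hx : rate d K h σ N V x γ ≠ 0) :
    x ∈ grid d K h N ∧ γ.act h x ∈ grid d K h N := by
  by_contra hc
  exact hx (by unfold rate; rw [if_neg hc])

lemma grid_nonempty (hN : N ≠ 0) : (grid d K h N).Nonempty :=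
  Finset.image_nonempty.mpr ⟨fun _ => ⟨0, Nat.pos_of_ne_zero hN⟩, Finset.mem_univ _⟩

lemma Znorm_pos (hg : (grid d K h N).Nonempty) : 0 < Znorm d K h σ N V :=
  Finset.sum_pos (fun _ _ => Real.exp_pos _) hg

lemma mh_pos (hg : (grid d K h N).Nonempty) (i : Pt d) : 0 < mh d K h σ N V i :=
  div_pos (Real.exp_pos _) (Znorm_pos hg)

lemma detailed_balance (hσ : σ ≠ 0) (i : Pt d) (γ : Move d) :
    mh d K h σ N V i * rate d K h σ N V i γ
      = mh d K h σ N V (γ.act h i) * rate d K h σ N V (γ.act h i) γ.inv := by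
  by_cases hmem : i ∈ grid d K h N ∧ γ.act h i ∈ grid d K h N
  · have hσ2 : (σ : ℝ) ^ 2 ≠ 0 := pow_ne_zero 2 hσ
    have key : ∀ A B : ℝ,
        Real.exp (-A / σ ^ 2) / Znorm d K h σ N V
            * (σ ^ 2 / h ^ 2 * Real.exp (-(B - A) / (2 * σ ^ 2)))
          = Real.exp (-B / σ ^ 2) / Znorm d K h σ N V
              * (σ ^ 2 / h ^ 2 * Real.exp (-(A - B) / (2 * σ ^ 2))) := by
      intro A B
      have hexp : Real.exp (-A / σ ^ 2) * Real.exp (-(B - A) / (2 * σ ^ 2))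
          = Real.exp (-B / σ ^ 2) * Real.exp (-(A - B) / (2 * σ ^ 2)) := by
        rw [← Real.exp_add, ← Real.exp_add]
        congr 1
        field_simp
        ring
      calc Real.exp (-A / σ ^ 2) / Znorm d K h σ N V
              * (σ ^ 2 / h ^ 2 * Real.exp (-(B - A) / (2 * σ ^ 2)))
          = Real.exp (-A / σ ^ 2) * Real.exp (-(B - A) / (2 * σ ^ 2))
              * (σ ^ 2 / h ^ 2) / Znorm d K h σ N V := by ring
        _ = Real.exp (-B / σ ^ 2) * Real.exp (-(A - B) / (2 * σ ^ 2))
              * (σ ^ 2 / h ^ 2) / Znorm d K h σ N V := by rw [hexp]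
        _ = Real.exp (-B / σ ^ 2) / Znorm d K h σ N V
              * (σ ^ 2 / h ^ 2 * Real.exp (-(A - B) / (2 * σ ^ 2))) := by ring
    unfold mh rate
    rw [if_pos hmem,
        if_pos (show γ.act h i ∈ grid d K h N ∧ γ.inv.act h (γ.act h i) ∈ grid d K h N by
          rw [Move.act_inv_act]; exact ⟨hmem.2, hmem.1⟩),
        Move.act_inv_act, key]
  · have h1 : rate d K h σ N V i γ = 0 := by unfold rate; rw [if_neg hmem]
    have h2 : rate d K h σ N V (γ.act h i) γ.inv = 0 := by
      unfold rate
      rw [if_neg]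
      rintro ⟨ha, hb⟩
      rw [Move.act_inv_act] at hb
      exact hmem ⟨hb, ha⟩
    rw [h1, h2, mul_zero, mul_zero]

lemma detailed_balance_p (hσ : σ ≠ 0) (i : Pt d) (γ : Move d) :
    mh d K h σ N V i * prate d K h σ N V i γ
      = mh d K h σ N V (γ.act h i) * prate d K h σ N V (γ.act h i) γ.inv := by
  unfold prate
  rw [← mul_div_assoc, ← mul_div_assoc, detailed_balance hσ i γ]

lemma Tcal_nonneg (hg : (grid d K h N).Nonempty) : 0 ≤ Tcal d K h σ N V := by
  obtain ⟨i0, hi0⟩ := hg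
  have hb : BddAbove ((fun i => ∑ γ : Move d, rate d K h σ N V i γ) ''
      (grid d K h N : Set (Pt d))) :=
    ((grid d K h N).finite_toSet.image _).bddAbove
  have h0 : (0 : ℝ) ≤ ∑ γ : Move d, rate d K h σ N V i0 γ :=
    Finset.sum_nonneg fun γ _ => rate_nonneg _ _
  have h1 := le_csSup hb (Set.mem_image_of_mem _ (Finset.mem_coe.mpr hi0))
  unfold Tcal
  linarith

lemma sum_rate_le {i : Pt d} (hi : i ∈ grid d K h N) :
    ∑ γ : Move d, rate d K h σ N V i γ ≤ Tcal d K h σ N V / 2 := by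
  have hb : BddAbove ((fun i => ∑ γ : Move d, rate d K h σ N V i γ) ''
      (grid d K h N : Set (Pt d))) :=
    ((grid d K h N).finite_toSet.image _).bddAbove
  have h1 := le_csSup hb (Set.mem_image_of_mem _ (Finset.mem_coe.mpr hi))
  unfold Tcal
  linarith

lemma grad_ineq {φ : ℝ → ℝ} (hconv : ConvexOn ℝ (Set.Ici 0) φ)
    {a b : ℝ} (ha : 0 < a) (hb : 0 ≤ b) (hd : DifferentiableAt ℝ φ a) :
    φ a + deriv φ a * (b - a) ≤ φ b := by
  rcases lt_trichotomy a b with hab | rfl | hab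
  · have h1 := hconv.deriv_le_slope (Set.mem_Ici.mpr ha.le) (Set.mem_Ici.mpr hb) hab hd
    rw [slope_def_field] at h1
    have h2 := (le_div_iff₀ (by linarith)).mp h1
    linarith
  · simp
  · have h1 := hconv.slope_le_deriv (Set.mem_Ici.mpr hb) (Set.mem_Ici.mpr ha.le) hab hd
    rw [slope_def_field] at h1
    have h2 := (div_le_iff₀ (by linarith)).mp h1
    linarith

lemma convexOn_affine (c e : ℝ) : ConvexOn ℝ (Set.Ici (0 : ℝ)) (fun x => c * x + e) := by
  refine ⟨convex_Ici 0, fun x _ y _ a b ha hb hab => ?_⟩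
  simp only [smul_eq_mul]
  have h1 : a * (c * x + e) + b * (c * y + e) = c * (a * x + b * y) + (a + b) * e := by ring
  rw [h1, hab, one_mul]

end EntropyProductionHelpers

section MasterLemma

variable {d : ℕ} {K h σ : ℝ} {N : ℕ} {V : Pt d → ℝ}

lemma entropy_master (hp : Params d K h σ N V) (φ : ℝ → ℝ)
    (hconv : ConvexOn ℝ (Set.Ici 0) φ)
    (hdiff : ∀ x : ℝ, 0 < x → DifferentiableAt ℝ φ x)
    (hmono : ∀ a b : ℝ, 0 < a → a ≤ b → deriv φ a ≤ deriv φ b)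
    (f : Pt d → ℝ) (hf : ∀ i ∈ grid d K h N, 0 < f i) :
    0 ≤ entPhi d K h σ N V φ f - entPhi d K h σ N V φ (piStep d K h σ N V f) ∧
    entPhi d K h σ N V φ f - entPhi d K h σ N V φ (piStep d K h σ N V f)
      ≤ fisher d K h σ N V φ f ∧ 0 ≤ fisher d K h σ N V φ f := by
  obtain ⟨hd1, hK, hh, hNh, hσ, hV⟩ := hp
  have hN : N ≠ 0 := by
    rintro rfl
    simp at hNh
    linarith
  have hg : (grid d K h N).Nonempty := grid_nonempty hN
  by_cases hT : Tcal d K h σ N V = 0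
  · have hps : piStep d K h σ N V f = f := by
      funext i
      simp [piStep, prate, hT]
    have hfz : fisher d K h σ N V φ f = 0 := by
      simp [fisher, prate, hT]
    rw [hps, hfz]
    simp
  · have hT0 : 0 < Tcal d K h σ N V := lt_of_le_of_ne (Tcal_nonneg hg) (Ne.symm hT)
    have hm : ∀ i : Pt d, 0 < mh d K h σ N V i := mh_pos hg
    have hp0 : ∀ (i : Pt d) (γ : Move d), 0 ≤ prate d K h σ N V i γ :=
      fun i γ => div_nonneg (rate_nonneg i γ) hT0.le
    have hpsum : ∀ i ∈ grid d K h N, ∑ γ : Move d, prate d K h σ N V i γ ≤ 1 / 2 := by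
      intro i hi
      have h1 := sum_rate_le (σ := σ) (V := V) hi
      unfold prate
      rw [← Finset.sum_div, div_le_iff₀ hT0]
      linarith
    have hpmem : ∀ (i : Pt d) (γ : Move d), prate d K h σ N V i γ ≠ 0 →
        i ∈ grid d K h N ∧ γ.act h i ∈ grid d K h N := by
      intro i γ hne
      refine mem_of_rate_ne (σ := σ) (V := V) i γ fun hr => hne ?_
      unfold prate
      rw [hr, zero_div]
    -- reversibility
    have rev : ∀ A : Pt d → Pt d → ℝ,
        ∑ i ∈ grid d K h N, ∑ γ : Move d,
            prate d K h σ N V i γ * A i (γ.act h i) * mh d K h σ N V i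
          = ∑ i ∈ grid d K h N, ∑ γ : Move d,
              prate d K h σ N V i γ * A (γ.act h i) i * mh d K h σ N V i := by
      intro A
      have hmapsto : ∀ q ∈ (grid d K h N ×ˢ (Finset.univ : Finset (Move d))).filter
          (fun q : Pt d × Move d => prate d K h σ N V q.1 q.2 ≠ 0),
          (q.2.act h q.1, q.2.inv) ∈ (grid d K h N ×ˢ (Finset.univ : Finset (Move d))).filter
            (fun q : Pt d × Move d => prate d K h σ N V q.1 q.2 ≠ 0) := by
        intro q hq
        obtain ⟨hq1, hq2⟩ := Finset.mem_filter.mp hq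
        have hmem := hpmem q.1 q.2 hq2
        have db := detailed_balance_p (d := d) (K := K) (h := h) (N := N) (V := V)
          hσ.ne' q.1 q.2
        refine Finset.mem_filter.mpr ⟨Finset.mem_product.mpr ⟨hmem.2, Finset.mem_univ _⟩,
          fun hz => ?_⟩
        have hz' : prate d K h σ N V (q.2.act h q.1) q.2.inv = 0 := hz
        rw [hz', mul_zero] at db
        exact hq2 ((mul_eq_zero.mp db).resolve_left (hm q.1).ne')
      have hinvol : ∀ q ∈ (grid d K h N ×ˢ (Finset.univ : Finset (Move d))).filter
          (fun q : Pt d × Move d => prate d K h σ N V q.1 q.2 ≠ 0),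
          (((q.2.act h q.1, q.2.inv) : Pt d × Move d).2.act h (q.2.act h q.1, q.2.inv).1,
            ((q.2.act h q.1, q.2.inv) : Pt d × Move d).2.inv) = q := by
        intro q hq
        show (q.2.inv.act h (q.2.act h q.1), q.2.inv.inv) = q
        rw [Move.act_inv_act, Move.inv_inv]
      have main : ∑ q ∈ (grid d K h N ×ˢ (Finset.univ : Finset (Move d))).filter
            (fun q : Pt d × Move d => prate d K h σ N V q.1 q.2 ≠ 0),
            prate d K h σ N V q.1 q.2 * A q.1 (q.2.act h q.1) * mh d K h σ N V q.1
          = ∑ q ∈ (grid d K h N ×ˢ (Finset.univ : Finset (Move d))).filter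
              (fun q : Pt d × Move d => prate d K h σ N V q.1 q.2 ≠ 0),
              prate d K h σ N V q.1 q.2 * A (q.2.act h q.1) q.1 * mh d K h σ N V q.1 := by
        refine Finset.sum_nbij' (fun q => (q.2.act h q.1, q.2.inv))
          (fun q => (q.2.act h q.1, q.2.inv)) hmapsto hmapsto hinvol hinvol ?_
        intro q hq
        obtain ⟨hq1, hq2⟩ := Finset.mem_filter.mp hq
        have db := detailed_balance_p (d := d) (K := K) (h := h) (N := N) (V := V)
          hσ.ne' q.1 q.2
        show prate d K h σ N V q.1 q.2 * A q.1 (q.2.act h q.1) * mh d K h σ N V q.1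
          = prate d K h σ N V (q.2.act h q.1) q.2.inv
              * A (q.2.inv.act h (q.2.act h q.1)) (q.2.act h q.1)
              * mh d K h σ N V (q.2.act h q.1)
        rw [Move.act_inv_act]
        calc prate d K h σ N V q.1 q.2 * A q.1 (q.2.act h q.1) * mh d K h σ N V q.1
            = mh d K h σ N V q.1 * prate d K h σ N V q.1 q.2 * A q.1 (q.2.act h q.1) := by ring
          _ = mh d K h σ N V (q.2.act h q.1) * prate d K h σ N V (q.2.act h q.1) q.2.inv
                * A q.1 (q.2.act h q.1) := by rw [db]
          _ = prate d K h σ N V (q.2.act h q.1) q.2.inv * A q.1 (q.2.act h q.1)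
                * mh d K h σ N V (q.2.act h q.1) := by ring
      have hfil1 := Finset.sum_filter_of_ne
        (s := grid d K h N ×ˢ (Finset.univ : Finset (Move d)))
        (f := fun q : Pt d × Move d =>
          prate d K h σ N V q.1 q.2 * A q.1 (q.2.act h q.1) * mh d K h σ N V q.1)
        (p := fun q : Pt d × Move d => prate d K h σ N V q.1 q.2 ≠ 0)
        (fun q _ hq hz => hq (by simp [hz]))
      have hfil2 := Finset.sum_filter_of_ne
        (s := grid d K h N ×ˢ (Finset.univ : Finset (Move d)))
        (f := fun q : Pt d × Move d =>
          prate d K h σ N V q.1 q.2 * A (q.2.act h q.1) q.1 * mh d K h σ N V q.1)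
        (p := fun q : Pt d × Move d => prate d K h σ N V q.1 q.2 ≠ 0)
        (fun q _ hq hz => hq (by simp [hz]))
      rw [← Finset.sum_product'
            (f := fun i γ => prate d K h σ N V i γ * A i (γ.act h i) * mh d K h σ N V i),
          ← Finset.sum_product'
            (f := fun i γ => prate d K h σ N V i γ * A (γ.act h i) i * mh d K h σ N V i),
          ← hfil1, ← hfil2]
      exact main
    have rev0 : ∀ g : Pt d → ℝ,
        ∑ i ∈ grid d K h N, ∑ γ : Move d,
            prate d K h σ N V i γ * (g (γ.act h i) - g i) * mh d K h σ N V i = 0 := by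
      intro g
      have h1 := rev (fun x y => g y - g x)
      have h2 : ∑ i ∈ grid d K h N, ∑ γ : Move d,
          prate d K h σ N V i γ * (g i - g (γ.act h i)) * mh d K h σ N V i
            = -∑ i ∈ grid d K h N, ∑ γ : Move d,
                prate d K h σ N V i γ * (g (γ.act h i) - g i) * mh d K h σ N V i := by
        rw [← Finset.sum_neg_distrib]
        refine Finset.sum_congr rfl fun i _ => ?_
        rw [← Finset.sum_neg_distrib]
        exact Finset.sum_congr rfl fun γ _ => by ring
      rw [h2] at h1
      linarith
    -- auxiliary rearrangement
    have hsplit : ∀ i : Pt d, ∑ γ : Move d, prate d K h σ N V i γ * (f (γ.act h i) - f i)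
        = (∑ γ : Move d, prate d K h σ N V i γ * f (γ.act h i))
          - (∑ γ : Move d, prate d K h σ N V i γ) * f i := by
      intro i
      rw [Finset.sum_mul, ← Finset.sum_sub_distrib]
      exact Finset.sum_congr rfl fun γ _ => by ring
    -- mean preservation
    have hmean : ∑ i ∈ grid d K h N, piStep d K h σ N V f i * mh d K h σ N V i
        = ∑ i ∈ grid d K h N, f i * mh d K h σ N V i := by
      have he : ∀ i ∈ grid d K h N, piStep d K h σ N V f i * mh d K h σ N V i
          = f i * mh d K h σ N V i + ∑ γ : Move d,
              prate d K h σ N V i γ * (f (γ.act h i) - f i) * mh d K h σ N V i := by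
        intro i _
        unfold piStep
        rw [add_mul, Finset.sum_mul]
      rw [Finset.sum_congr rfl he, Finset.sum_add_distrib, rev0 f, add_zero]
    -- entropy difference formula
    have hent : entPhi d K h σ N V φ f - entPhi d K h σ N V φ (piStep d K h σ N V f)
        = ∑ i ∈ grid d K h N, (φ (f i) - φ (piStep d K h σ N V f i)) * mh d K h σ N V i := by
      unfold entPhi
      rw [hmean]
      have hr : ∑ i ∈ grid d K h N, (φ (f i) - φ (piStep d K h σ N V f i)) * mh d K h σ N V i
          = ∑ i ∈ grid d K h N, φ (f i) * mh d K h σ N V i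
            - ∑ i ∈ grid d K h N, φ (piStep d K h σ N V f i) * mh d K h σ N V i := by
        rw [← Finset.sum_sub_distrib]
        exact Finset.sum_congr rfl fun i _ => by ring
      rw [hr]
      ring
    -- positivity of piStep f
    have hpif_pos : ∀ i ∈ grid d K h N, 0 < piStep d K h σ N V f i := by
      intro i hi
      have h1 : 0 ≤ ∑ γ : Move d, prate d K h σ N V i γ * f (γ.act h i) := by
        refine Finset.sum_nonneg fun γ _ => ?_
        by_cases hz : prate d K h σ N V i γ = 0
        · rw [hz, zero_mul]
        · exact mul_nonneg (hp0 i γ) (hf _ (hpmem i γ hz).2).le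
      have h2 := hpsum i hi
      have h3 := hf i hi
      unfold piStep
      rw [hsplit i]
      nlinarith [mul_le_mul_of_nonneg_right h2 h3.le]
    -- Jensen inequality at each point
    have jensen : ∀ i ∈ grid d K h N,
        φ (piStep d K h σ N V f i) ≤ φ (f i) + ∑ γ : Move d,
          prate d K h σ N V i γ * (φ (f (γ.act h i)) - φ (f i)) := by
      intro i hi
      set w : Option (Move d) → ℝ :=
        fun o => o.elim (1 - ∑ γ : Move d, prate d K h σ N V i γ)
          (fun γ => prate d K h σ N V i γ) with hw_def
      set v : Option (Move d) → ℝ :=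
        fun o => o.elim (f i)
          (fun γ => if prate d K h σ N V i γ = 0 then f i else f (γ.act h i)) with hv_def
      have hw0 : ∀ o ∈ (Finset.univ : Finset (Option (Move d))), 0 ≤ w o := by
        intro o _
        cases o with
        | none =>
          have := hpsum i hi
          simp only [hw_def, Option.elim]
          linarith
        | some γ => exact hp0 i γ
      have hw1 : ∑ o : Option (Move d), w o = 1 := by
        rw [Fintype.sum_option]
        simp only [hw_def, Option.elim]
        ring
      have hv0 : ∀ o ∈ (Finset.univ : Finset (Option (Move d))), v o ∈ Set.Ici (0 : ℝ) := by
        intro o _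
        cases o with
        | none => exact (hf i hi).le
        | some γ =>
          by_cases hz : prate d K h σ N V i γ = 0
          · simp only [hv_def, Option.elim, if_pos hz]
            exact (hf i hi).le
          · simp only [hv_def, Option.elim, if_neg hz]
            exact (hf _ (hpmem i γ hz).2).le
      have key := hconv.map_sum_le hw0 hw1 hv0
      have hterm : ∀ γ : Move d, w (some γ) • v (some γ)
          = prate d K h σ N V i γ * f (γ.act h i) := by
        intro γ
        by_cases hz : prate d K h σ N V i γ = 0 <;>
          simp [hw_def, hv_def, hz, smul_eq_mul]
      have hterm' : ∀ γ : Move d, w (some γ) • φ (v (some γ))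
          = prate d K h σ N V i γ * φ (f (γ.act h i)) := by
        intro γ
        by_cases hz : prate d K h σ N V i γ = 0 <;>
          simp [hw_def, hv_def, hz, smul_eq_mul]
      have hsum_v : ∑ o : Option (Move d), w o • v o = piStep d K h σ N V f i := by
        rw [Fintype.sum_option, Finset.sum_congr rfl fun γ _ => hterm γ]
        unfold piStep
        rw [hsplit i]
        simp only [hw_def, hv_def, Option.elim, smul_eq_mul]
        ring
      have hsum_phi : ∑ o : Option (Move d), w o • φ (v o)
          = φ (f i) + ∑ γ : Move d,
              prate d K h σ N V i γ * (φ (f (γ.act h i)) - φ (f i)) := by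
        rw [Fintype.sum_option, Finset.sum_congr rfl fun γ _ => hterm' γ]
        have hsplit2 : ∑ γ : Move d, prate d K h σ N V i γ * (φ (f (γ.act h i)) - φ (f i))
            = (∑ γ : Move d, prate d K h σ N V i γ * φ (f (γ.act h i)))
              - (∑ γ : Move d, prate d K h σ N V i γ) * φ (f i) := by
          rw [Finset.sum_mul, ← Finset.sum_sub_distrib]
          exact Finset.sum_congr rfl fun γ _ => by ring
        rw [hsplit2]
        simp only [hw_def, hv_def, Option.elim, smul_eq_mul]
        ring
      rw [hsum_v, hsum_phi] at key
      exact key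
    -- nonnegativity
    have hlow : 0 ≤ entPhi d K h σ N V φ f
        - entPhi d K h σ N V φ (piStep d K h σ N V f) := by
      rw [hent]
      have h1 : ∀ i ∈ grid d K h N,
          (-(∑ γ : Move d, prate d K h σ N V i γ * (φ (f (γ.act h i)) - φ (f i))))
              * mh d K h σ N V i
            ≤ (φ (f i) - φ (piStep d K h σ N V f i)) * mh d K h σ N V i := by
        intro i hi
        refine mul_le_mul_of_nonneg_right ?_ (hm i).le
        have := jensen i hi
        linarith
      have h2 := Finset.sum_le_sum h1
      have h3 : ∑ i ∈ grid d K h N,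
          (-(∑ γ : Move d, prate d K h σ N V i γ * (φ (f (γ.act h i)) - φ (f i))))
            * mh d K h σ N V i = 0 := by
        have h4 := rev0 (fun x => φ (f x))
        have he : ∀ i ∈ grid d K h N,
            (-(∑ γ : Move d, prate d K h σ N V i γ * (φ (f (γ.act h i)) - φ (f i))))
                * mh d K h σ N V i
              = -(∑ γ : Move d,
                  prate d K h σ N V i γ * (φ (f (γ.act h i)) - φ (f i)) * mh d K h σ N V i) := by
          intro i _
          rw [neg_mul, Finset.sum_mul]
        rw [Finset.sum_congr rfl he, Finset.sum_neg_distrib, h4, neg_zero]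
      linarith
    -- upper bound pointwise
    have hub : ∀ i ∈ grid d K h N, φ (f i) - φ (piStep d K h σ N V f i)
        ≤ deriv φ (f i) * (f i - piStep d K h σ N V f i) := by
      intro i hi
      have hgi := grad_ineq hconv (hf i hi) (hpif_pos i hi).le (hdiff _ (hf i hi))
      have he : deriv φ (f i) * (f i - piStep d K h σ N V f i)
          = -(deriv φ (f i) * (piStep d K h σ N V f i - f i)) := by ring
      rw [he]
      linarith
    have hS1 : ∑ i ∈ grid d K h N,
        deriv φ (f i) * (f i - piStep d K h σ N V f i) * mh d K h σ N V i
          = ∑ i ∈ grid d K h N, ∑ γ : Move d,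
              prate d K h σ N V i γ * (deriv φ (f i) * (f i - f (γ.act h i)))
                * mh d K h σ N V i := by
      refine Finset.sum_congr rfl fun i _ => ?_
      unfold piStep
      have e1 : ∑ γ : Move d, prate d K h σ N V i γ * (f i - f (γ.act h i))
          = -∑ γ : Move d, prate d K h σ N V i γ * (f (γ.act h i) - f i) := by
        rw [← Finset.sum_neg_distrib]
        exact Finset.sum_congr rfl fun γ _ => by ring
      have e2 : f i - (f i + ∑ γ : Move d, prate d K h σ N V i γ * (f (γ.act h i) - f i))
          = ∑ γ : Move d, prate d K h σ N V i γ * (f i - f (γ.act h i)) := by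
        rw [e1]; ring
      rw [e2, Finset.mul_sum, Finset.sum_mul]
      exact Finset.sum_congr rfl fun γ _ => by ring
    have hS12 := rev (fun x y => deriv φ (f x) * (f x - f y))
    have hfisher_eq : fisher d K h σ N V φ f
        = ∑ i ∈ grid d K h N, ∑ γ : Move d,
            prate d K h σ N V i γ * (deriv φ (f i) * (f i - f (γ.act h i)))
              * mh d K h σ N V i := by
      unfold fisher
      have e : (∑ i ∈ grid d K h N, ∑ γ : Move d,
          prate d K h σ N V i γ * (deriv φ (f (γ.act h i)) - deriv φ (f i))
            * (f (γ.act h i) - f i) * mh d K h σ N V i)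
            = (∑ i ∈ grid d K h N, ∑ γ : Move d,
                prate d K h σ N V i γ * (deriv φ (f (γ.act h i)) * (f (γ.act h i) - f i))
                  * mh d K h σ N V i)
              + ∑ i ∈ grid d K h N, ∑ γ : Move d,
                  prate d K h σ N V i γ * (deriv φ (f i) * (f i - f (γ.act h i)))
                    * mh d K h σ N V i := by
        rw [← Finset.sum_add_distrib]
        refine Finset.sum_congr rfl fun i _ => ?_
        rw [← Finset.sum_add_distrib]
        exact Finset.sum_congr rfl fun γ _ => by ring
      rw [e, ← hS12]
      ring
    have hupper : entPhi d K h σ N V φ f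
        - entPhi d K h σ N V φ (piStep d K h σ N V f) ≤ fisher d K h σ N V φ f := by
      rw [hent, hfisher_eq, ← hS1]
      exact Finset.sum_le_sum fun i hi =>
        mul_le_mul_of_nonneg_right (hub i hi) (hm i).le
    have hfnn : 0 ≤ fisher d K h σ N V φ f := by
      unfold fisher
      refine mul_nonneg (by norm_num) (Finset.sum_nonneg fun i hi =>
        Finset.sum_nonneg fun γ _ => ?_)
      by_cases hz : prate d K h σ N V i γ = 0
      · rw [hz, zero_mul, zero_mul, zero_mul]
      · have hmem := hpmem i γ hz
        have hfi := hf i hi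
        have hfg := hf _ hmem.2
        have hcore : 0 ≤ (deriv φ (f (γ.act h i)) - deriv φ (f i)) * (f (γ.act h i) - f i) := by
          rcases le_total (f i) (f (γ.act h i)) with hle | hle
          · have := hmono _ _ hfi hle
            nlinarith
          · have := hmono _ _ hfg hle
            nlinarith
        have h5 := mul_nonneg (mul_nonneg (hp0 i γ) hcore) (hm i).le
        nlinarith [h5]
    exact ⟨hlow, hupper, hfnn⟩

end MasterLemma

/-- Entropy production is nonnegative and dominated by the Fisher information. -/
theorem entropy_production_bounds
    (d : ℕ) (K h σ : ℝ) (N : ℕ) (V : Pt d → ℝ) (hp : Params d K h σ N V)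
    (α : ℝ) (hα : α = 1 ∨ (1 < α ∧ α ≤ 2))
    (f : Pt d → ℝ) (hf : ∀ i ∈ grid d K h N, 0 < f i) :
    0 ≤ entPhi d K h σ N V (phiAlpha α) f
          - entPhi d K h σ N V (phiAlpha α) (piStep d K h σ N V f) ∧
    entPhi d K h σ N V (phiAlpha α) f
        - entPhi d K h σ N V (phiAlpha α) (piStep d K h σ N V f)
      ≤ (2 / α) * fisher d K h σ N V (phiAlpha α) f := by
  rcases hα with rfl | ⟨hα1, hα2⟩
  · -- α = 1
    have hφeq : phiAlpha 1 = fun x => x * Real.log x - x + 1 := by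
      funext x
      simp [phiAlpha]
    have hconv : ConvexOn ℝ (Set.Ici 0) (phiAlpha 1) := by
      rw [hφeq]
      have h1 := Real.convexOn_mul_log
      have h2 := h1.add (convexOn_affine (-1) 1)
      have heq : (fun x : ℝ => x * Real.log x - x + 1)
          = fun x : ℝ => x * Real.log x + (-1 * x + 1) := by
        funext x; ring
      rw [heq]
      exact h2
    have hDer : ∀ x : ℝ, 0 < x → HasDerivAt (phiAlpha 1) (Real.log x) x := by
      intro x hx
      rw [hφeq]
      have h1 := ((Real.hasDerivAt_mul_log hx.ne').sub (hasDerivAt_id' (x := x))).add_const 1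
      simpa using h1
    obtain ⟨hA, hB, hC⟩ := entropy_master hp (phiAlpha 1) hconv
      (fun x hx => (hDer x hx).differentiableAt)
      (fun a b ha hab => by
        rw [(hDer a ha).deriv, (hDer b (lt_of_lt_of_le ha hab)).deriv]
        exact Real.log_le_log ha hab) f hf
    refine ⟨hA, hB.trans ?_⟩
    have h21 : (2 : ℝ) / 1 = 2 := by norm_num
    rw [h21]
    linarith
  · -- 1 < α ≤ 2
    have hne : α ≠ 1 := ne_of_gt hα1
    have hα0 : (0 : ℝ) < α := by linarith
    have hc1 : (0 : ℝ) ≤ (α - 1)⁻¹ := inv_nonneg.mpr (by linarith)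
    have hφeq : phiAlpha α = fun x => (α - 1)⁻¹ * (x ^ α - x) - x + 1 := by
      funext x
      simp [phiAlpha, hne]
    have hconv : ConvexOn ℝ (Set.Ici 0) (phiAlpha α) := by
      rw [hφeq]
      have h1 : ConvexOn ℝ (Set.Ici 0) fun x : ℝ => x ^ α := convexOn_rpow (by linarith)
      have h2 := (h1.smul hc1).add (convexOn_affine (-(α - 1)⁻¹ - 1) 1)
      have heq : (fun x : ℝ => (α - 1)⁻¹ * (x ^ α - x) - x + 1)
          = fun x : ℝ => (α - 1)⁻¹ • x ^ α + ((-(α - 1)⁻¹ - 1) * x + 1) := by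
        funext x
        simp only [smul_eq_mul]
        ring
      rw [heq]
      exact h2
    have hDer : ∀ x : ℝ, 0 < x →
        HasDerivAt (phiAlpha α) ((α - 1)⁻¹ * (α * x ^ (α - 1) - 1) - 1) x := by
      intro x hx
      rw [hφeq]
      have h1 : HasDerivAt (fun y : ℝ => y ^ α) (α * x ^ (α - 1)) x :=
        Real.hasDerivAt_rpow_const (Or.inl hx.ne')
      have h2 := (((h1.sub (hasDerivAt_id' (x := x))).const_mul ((α - 1)⁻¹)).sub
        (hasDerivAt_id' (x := x))).add_const 1
      exact h2
    obtain ⟨hA, hB, hC⟩ := entropy_master hp (phiAlpha α) hconv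
      (fun x hx => (hDer x hx).differentiableAt)
      (fun a b ha hab => by
        rw [(hDer a ha).deriv, (hDer b (lt_of_lt_of_le ha hab)).deriv]
        have hpow : a ^ (α - 1) ≤ b ^ (α - 1) :=
          Real.rpow_le_rpow ha.le hab (by linarith)
        nlinarith [mul_nonneg (mul_nonneg hc1 hα0.le) (sub_nonneg.mpr hpow)]) f hf
    refine ⟨hA, hB.trans ?_⟩
    have h21 : 1 ≤ 2 / α := by
      rw [le_div_iff₀ hα0]
      linarith
    nlinarith [hC, h21]
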